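/- arXiv:math/9912138 — 4 statements merged into one kernel-verified Lean document; each statement's English description precedes it below -/
import Mathlib

section
/- Let A be a commutative ring and let F(X) = X^n - u₁X^{n-1} + ... + (-1)^n uₙ be a monic polynomial in A[X]. Then the coefficients u₁, ..., uₙ are all nilpotent in A if and only if X lies in the radical of the ideal generated by F(X) in A[X]. -/
open Polynomial

lemma aux_domain {D : Type*} [CommRing D] [IsDomain D] {f : D[X]} (hf : f.Monic)
    {k : ℕ} (h : f ∣ X ^ k) : f = X ^ f.natDegree := by
  let K := FractionRing D
  have hinj : Function.Injective (algebraMap D K) := IsFractionRing.injective D K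
  have hmap : (f.map (algebraMap D K)) ∣ X ^ k := by
    have := Polynomial.map_dvd (algebraMap D K) h
    simpa using this
  obtain ⟨i, hik, hassoc⟩ := (dvd_prime_pow Polynomial.prime_X k).mp hmap
  obtain ⟨c, hc⟩ := hassoc.symm
  obtain ⟨a, ha, hCa⟩ := Polynomial.isUnit_iff.mp c.isUnit
  have ha0 : a ≠ 0 := ha.ne_zero
  have hfe : f.map (algebraMap D K) = C a * X ^ i := by
    rw [← hc, ← hCa]; ring
  have hfm : (f.map (algebraMap D K)).Monic := hf.map _
  have hlead : a = 1 := by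
    have := hfm.leadingCoeff
    rw [hfe] at this
    simpa [leadingCoeff, natDegree_C_mul_X_pow i a ha0] using this
  have hni : f.natDegree = i := by
    rw [← hf.natDegree_map (algebraMap D K), hfe, hlead]
    simp
  apply Polynomial.map_injective _ hinj
  rw [hfe, hlead, hni]
  simp

theorem stmt0 {A : Type*} [CommRing A] (n : ℕ) (hn : 0 < n) (u : ℕ → A)
    (F : Polynomial A) (hF : F.Monic) (hdeg : F.natDegree = n)
    (hcoeff : ∀ i < n, F.coeff i = (-1 : A) ^ (n - i) * u (n - i)) :
    (∀ j, 1 ≤ j → j ≤ n → IsNilpotent (u j)) ↔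
      X ∈ (Ideal.span {F} : Ideal (Polynomial A)).radical := by
  constructor
  · intro hu
    -- X^n - F has nilpotent coefficients, hence is nilpotent
    have hp : IsNilpotent ((X : A[X]) ^ n - F) := by
      rw [Polynomial.isNilpotent_iff]
      intro i
      rcases lt_trichotomy i n with hi | hi | hi
      · rw [coeff_sub, coeff_X_pow, if_neg hi.ne, hcoeff i hi]
        simp only [zero_sub]
        exact ((Commute.all _ _).isNilpotent_mul_left (hu (n - i) (by omega) (by omega))).neg
      · subst hi
        rw [coeff_sub, coeff_X_pow, if_pos rfl]
        have : F.coeff i = 1 := by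
          have := hF.leadingCoeff
          rwa [leadingCoeff, hdeg] at this
        simp [this]
      · rw [coeff_sub, coeff_X_pow, if_neg hi.ne',
          Polynomial.coeff_eq_zero_of_natDegree_lt (by omega)]
        simp
    obtain ⟨m, hm⟩ := hp
    have hXn : (X : A[X]) ^ n ∈ (Ideal.span {F} : Ideal (Polynomial A)).radical := by
      have h1 : F ∈ (Ideal.span {F} : Ideal (Polynomial A)).radical :=
        Ideal.le_radical (Ideal.subset_span rfl)
      have h2 : (X : A[X]) ^ n - F ∈ (Ideal.span {F} : Ideal (Polynomial A)).radical :=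
        ⟨m, by rw [hm]; exact Ideal.zero_mem _⟩
      have := Ideal.add_mem _ h2 h1
      simpa using this
    obtain ⟨m', hm'⟩ := hXn
    exact ⟨n * m', by rwa [pow_mul]⟩
  · rintro ⟨k, hk⟩ j hj1 hjn
    rw [Ideal.mem_span_singleton] at hk
    -- F ∣ X^k ; show F.coeff (n - j) nilpotent via primes
    have hcn : IsNilpotent (F.coeff (n - j)) := by
      rw [nilpotent_iff_mem_prime]
      intro P hP
      let φ := Ideal.Quotient.mk P
      have : IsDomain (A ⧸ P) := Ideal.Quotient.isDomain P
      have hdvd : F.map φ ∣ X ^ k := by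
        have := Polynomial.map_dvd φ hk
        simpa using this
      have heq : F.map φ = X ^ (F.map φ).natDegree := aux_domain (hF.map φ) hdvd
      have hnd : (F.map φ).natDegree = n := by rw [hF.natDegree_map, hdeg]
      have : φ (F.coeff (n - j)) = 0 := by
        have h0 := congrArg (fun p => Polynomial.coeff p (n - j)) heq
        simp only [coeff_map, hnd, coeff_X_pow] at h0
        rw [h0, if_neg (by omega)]
      rwa [← Ideal.Quotient.eq_zero_iff_mem]
    have hjeq : F.coeff (n - j) = (-1 : A) ^ j * u j := by
      have := hcoeff (n - j) (by omega)
      rwa [Nat.sub_sub_self hjn] at this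
    have : IsNilpotent ((-1 : A) ^ j * F.coeff (n - j)) := (Commute.all _ _).isNilpotent_mul_left hcn
    rw [hjeq, ← mul_assoc, ← pow_add, ← two_mul, pow_mul] at this
    simpa using this
end

section
/- Let A be a commutative ring and let F(x) = x^n - u₁x^{n-1} + ... + (-1)^n uₙ in A[x] have all coefficients u₁, ..., uₙ nilpotent. Then there exists a positive integer N and a polynomial G(x) ∈ A[x] such that x^N = F(x)·G(x). -/
open Polynomial

theorem stmt5 {A : Type*} [CommRing A] (n : ℕ) (F : Polynomial A) (hF : F.Monic)
    (hdeg : F.natDegree = n) (hnil : ∀ i < n, IsNilpotent (F.coeff i)) :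
    ∃ N : ℕ, 0 < N ∧ ∃ G : Polynomial A, X ^ N = F * G := by
  rcases Nat.eq_zero_or_pos n with hn | hn
  · -- n = 0 : F is a monic constant, so F = 1
    have hF1 : F = 1 := by
      have := hF.natDegree_eq_zero.mp (by rw [hdeg, hn])
      exact this
    exact ⟨1, one_pos, X, by simp [hF1]⟩
  · set P : Polynomial A := F - X ^ n with hP
    have hPnil : IsNilpotent P := by
      rw [Polynomial.isNilpotent_iff]
      intro i
      rcases lt_trichotomy i n with h | h | h
      · have : P.coeff i = F.coeff i := by
          simp only [hP, coeff_sub, coeff_X_pow, if_neg (ne_of_lt h), sub_zero]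
        rw [this]; exact hnil i h
      · have : P.coeff i = 0 := by
          subst h
          simp [hP, coeff_X_pow, ← hdeg, hF.coeff_natDegree]
        simp [this]
      · have : P.coeff i = 0 := by
          have h1 : F.coeff i = 0 := by
            apply coeff_eq_zero_of_natDegree_lt
            rw [hdeg]; exact h
          simp only [hP, coeff_sub, coeff_X_pow, if_neg (ne_of_gt h), h1, sub_zero]
        simp [this]
    obtain ⟨k, hk⟩ := hPnil
    have hk1 : P ^ (k + 1) = 0 := by rw [pow_succ, hk, zero_mul]
    have hXn : X ^ n = F - P := by simp [hP]
    have hdvd : F ∣ X ^ (n * (k + 1)) := by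
      have h1 : (F - P) - (-P) = F := by ring
      have h2 : (F - P) - (-P) ∣ (F - P) ^ (k + 1) - (-P) ^ (k + 1) :=
        sub_dvd_pow_sub_pow _ _ _
      rw [h1] at h2
      have h3 : (-P : Polynomial A) ^ (k + 1) = 0 := by
        rw [neg_pow, hk1, mul_zero]
      rw [h3, sub_zero] at h2
      rwa [pow_mul, hXn]
    obtain ⟨G, hG⟩ := hdvd
    exact ⟨n * (k + 1), Nat.mul_pos hn (Nat.succ_pos k), G, hG⟩
end

section
/- Let A be a commutative ring and ε ∈ A a nilpotent element with ε^{2^{m+1}} = 0 and ε^{2^{m+1}-1} ≠ 0. Then N = 2^{m+1} + n - 1 is the smallest positive integer such that x^N lies in the ideal of A[x] generated by x^n - εx^{n-1}. -/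
open Polynomial

theorem stmt9 {A : Type*} [CommRing A] (n m : ℕ) (hn : 1 ≤ n) (ε : A)
    (hε1 : ε ^ (2 ^ (m + 1)) = 0) (hε2 : ε ^ (2 ^ (m + 1) - 1) ≠ 0) :
    IsLeast {N : ℕ | 0 < N ∧
        (X : Polynomial A) ^ N ∈ Ideal.span ({X ^ n - C ε * X ^ (n - 1)} : Set (Polynomial A))}
      (2 ^ (m + 1) + n - 1) := by
  have hA : Nontrivial A := nontrivial_of_ne _ _ hε2
  have hf : (X : Polynomial A) ^ n - C ε * X ^ (n - 1) = X ^ (n - 1) * (X - C ε) := by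
    rw [mul_sub, ← pow_succ, Nat.sub_add_cancel hn]; ring
  have hpos : 0 < 2 ^ (m + 1) := Nat.pow_pos (by norm_num)
  constructor
  · refine ⟨by omega, ?_⟩
    rw [Ideal.mem_span_singleton, hf]
    have h1 : (X - C ε : Polynomial A) ∣ X ^ (2 ^ (m + 1)) := by
      have := sub_dvd_pow_sub_pow (X : Polynomial A) (C ε) (2 ^ (m + 1))
      simpa [← C_pow, hε1] using this
    have h2 : (2 : ℕ) ^ (m + 1) + n - 1 = (n - 1) + 2 ^ (m + 1) := by omega
    rw [h2, pow_add]
    exact mul_dvd_mul dvd_rfl h1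
  · rintro N ⟨hN0, hN⟩
    rw [Ideal.mem_span_singleton, hf] at hN
    obtain ⟨g, hg⟩ := hN
    have hXn0 : (X : Polynomial A) ^ N ≠ 0 := (monic_X_pow N).ne_zero
    have hg0 : g ≠ 0 := by rintro rfl; rw [mul_zero] at hg; exact hXn0 hg
    have hmono : ((X : Polynomial A) ^ (n - 1) * (X - C ε)).Monic :=
      (monic_X_pow _).mul (monic_X_sub_C ε)
    have hmdeg : ((X : Polynomial A) ^ (n - 1) * (X - C ε)).natDegree = n := by
      rw [(monic_X_pow _).natDegree_mul (monic_X_sub_C ε), natDegree_X_pow, natDegree_X_sub_C]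
      omega
    have hdeg : N = n + g.natDegree := by
      have h := congrArg natDegree hg
      rw [natDegree_X_pow, hmono.natDegree_mul' hg0, hmdeg] at h
      exact h
    set M := N - n + 1 with hM
    have hNM : N = (n - 1) + M := by omega
    have hcancel : (X - C ε) * g = X ^ M := by
      have hreg : IsLeftRegular ((X : Polynomial A) ^ (n - 1)) :=
        ((monic_X_pow (R := A) (n - 1)).isRegular).left
      exact hreg (show (X : Polynomial A) ^ (n - 1) * ((X - C ε) * g) = X ^ (n - 1) * X ^ M by
        rw [← mul_assoc, ← hg, hNM, pow_add])
    have hev : ε ^ M = 0 := by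
      have := congrArg (eval ε) hcancel
      simpa using this.symm
    have hMge : 2 ^ (m + 1) ≤ M := by
      by_contra hlt
      push_neg at hlt
      apply hε2
      have : ε ^ (2 ^ (m + 1) - 1) = ε ^ M * ε ^ (2 ^ (m + 1) - 1 - M) := by
        rw [← pow_add]; congr 1; omega
      rw [this, hev, zero_mul]
    omega
end

section
/- Let A be a commutative ring and F(x) = x^n - u₁x^{n-1} + ... + (-1)^n uₙ ∈ A[x] with all uᵢ nilpotent. Then F(x) becomes a unit multiple of a non-zero-divisor and, moreover, every element of the multiplicative set S = {f ∈ A[x] : f(0) is a unit in A} maps to a unit in A[x]/(F(x)); equivalently, the localization map A[x]/(F(x)) → S^{-1}(A[x])/(F(x)) is an isomorphism. -/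
open Polynomial

/-- The multiplicative set of polynomials whose constant term is a unit. -/
noncomputable def unitConstSubmonoid (A : Type*) [CommRing A] : Submonoid (Polynomial A) where
  carrier := {f | IsUnit (f.coeff 0)}
  mul_mem' := by
    intro a b ha hb
    simp only [Set.mem_setOf_eq, Polynomial.mul_coeff_zero] at *
    exact ha.mul hb
  one_mem' := by simp

theorem stmt15 {A : Type*} [CommRing A] (n : ℕ) (F : Polynomial A) (hF : F.Monic)
    (hdeg : F.natDegree = n) (hnil : ∀ i < n, IsNilpotent (F.coeff i)) :
    (∀ f ∈ unitConstSubmonoid A, IsUnit (Ideal.Quotient.mk (Ideal.span {F}) f)) ∧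
    Function.Bijective (Ideal.quotientMap
      (Ideal.span {algebraMap (Polynomial A) (Localization (unitConstSubmonoid A)) F})
      (algebraMap (Polynomial A) (Localization (unitConstSubmonoid A)))
      (by rw [Ideal.span_le])) := by
  set I : Ideal (Polynomial A) := Ideal.span {F} with hI
  set mkI := Ideal.Quotient.mk I with hmkI
  -- X is nilpotent in the quotient
  have hFmem : F ∈ I := Ideal.subset_span rfl
  have hXn : IsNilpotent (mkI X) := by
    have hnilp : IsNilpotent (X ^ n - F) := by
      rw [Polynomial.isNilpotent_iff]
      intro i
      rcases lt_trichotomy i n with hi | hi | hi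
      · simpa [Polynomial.coeff_X_pow, if_neg hi.ne] using (hnil i hi).neg
      · subst hi
        simp [Polynomial.coeff_X_pow, hdeg ▸ hF.coeff_natDegree]
      · have h1 : F.coeff i = 0 := Polynomial.coeff_eq_zero_of_natDegree_lt (by omega)
        simp [Polynomial.coeff_X_pow, if_neg hi.ne', h1]
    have hpow : IsNilpotent ((mkI X) ^ n) := by
      have heq : mkI (X ^ n - F) = (mkI X) ^ n := by
        rw [map_sub, map_pow]
        simp [show mkI F = 0 from Ideal.Quotient.eq_zero_iff_mem.mpr hFmem]
      exact heq ▸ hnilp.map mkI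
    exact hpow.of_pow
  have h1 : ∀ f ∈ unitConstSubmonoid A, IsUnit (mkI f) := by
    intro f hf
    have hf0 : IsUnit (f.coeff 0) := hf
    have hdvd : (X : Polynomial A) ∣ f - C (f.coeff 0) := by
      rw [Polynomial.X_dvd_iff]; simp
    obtain ⟨q, hq⟩ := hdvd
    have hnil2 : IsNilpotent (mkI (f - C (f.coeff 0))) := by
      rw [hq, map_mul]
      exact (Commute.all _ _).isNilpotent_mul_right hXn
    have hu : IsUnit (mkI (C (f.coeff 0))) := (hf0.map C).map mkI
    have heq : mkI f = mkI (f - C (f.coeff 0)) + mkI (C (f.coeff 0)) := by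
      rw [← map_add]; ring_nf
    rw [heq]
    exact hnil2.isUnit_add_right_of_commute hu (Commute.all _ _)
  refine ⟨h1, ?_⟩
  -- Part 2: bijectivity
  set L := Localization (unitConstSubmonoid A) with hL
  set φ := algebraMap (Polynomial A) L with hφ
  set J : Ideal L := Ideal.span {φ F} with hJ
  have hu : ∀ s : unitConstSubmonoid A, IsUnit (mkI s) := fun s => h1 s s.2
  set ψ : L →+* Polynomial A ⧸ I := IsLocalization.lift hu with hψ
  have hψφ : ∀ p : Polynomial A, ψ (φ p) = mkI p := fun p => IsLocalization.lift_eq hu p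
  have hψF : ψ (φ F) = 0 := by
    rw [hψφ]; exact Ideal.Quotient.eq_zero_iff_mem.mpr hFmem
  have hker : J ≤ RingHom.ker ψ := by
    rw [hJ, Ideal.span_le]
    rintro x rfl
    exact hψF
  have hcom : Ideal.comap φ J = I := by
    apply le_antisymm
    · intro p hp
      have : ψ (φ p) = 0 := hker hp
      rw [hψφ] at this
      exact Ideal.Quotient.eq_zero_iff_mem.mp this
    · rw [hI, Ideal.span_le]
      rintro x rfl
      exact Ideal.subset_span rfl
  have hIeq : Ideal.span ((Ideal.comap φ J : Ideal (Polynomial A)) : Set (Polynomial A)) = I := by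
    rw [Ideal.span_eq, hcom]
  have main : ∀ (K : Ideal (Polynomial A)) (_ : K = I) (H : K ≤ Ideal.comap φ J),
      Function.Bijective (Ideal.quotientMap J φ H) := by
    rintro K rfl H
    set g : L ⧸ J →+* Polynomial A ⧸ I := Ideal.Quotient.lift J ψ (fun a ha => RingHom.mem_ker.mp (hker ha)) with hg
    set Φ := Ideal.quotientMap J φ H with hΦ
    have left : ∀ x, g (Φ x) = x := by
      intro x
      obtain ⟨p, rfl⟩ := Ideal.Quotient.mk_surjective x
      rw [hΦ, Ideal.quotientMap_mk, hg, Ideal.Quotient.lift_mk]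
      exact hψφ p
    have right : ∀ x, Φ (g x) = x := by
      intro x
      obtain ⟨l, rfl⟩ := Ideal.Quotient.mk_surjective (I := J) x
      have key : (Φ.comp g).comp (Ideal.Quotient.mk J) = Ideal.Quotient.mk J := by
        refine IsLocalization.ringHom_ext (unitConstSubmonoid A) (S := L) ?_
        refine RingHom.ext fun p => ?_
        simp only [RingHom.comp_apply]
        rw [Ideal.Quotient.lift_mk]
        rw [show (algebraMap (Polynomial A) L) p = φ p from rfl, hψφ, hΦ, Ideal.quotientMap_mk]
      exact DFunLike.congr_fun key l
    exact Function.bijective_iff_has_inverse.mpr ⟨g, left, right⟩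
  exact main _ hIeq _
end
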